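/- Let Ω ⊆ ℂ be open and connected, λ₀, μ ∈ Ω, k ∈ ℕ, and let (φ_n) be a sequence of holomorphic functions on Ω that is uniformly bounded on every compact subset of Ω. Assume φ_n(λ₀) → 0 as n → ∞ and that there is δ > 0 with |φ_n^{(k)}(μ)| ≥ δ for all n. Then there exist a strictly increasing sequence of indices (n_j) and points λ_j ∈ Ω with λ_j → λ₀ and φ_{n_j}(λ_j) = 0 for all j. -/

import Mathlib

open Filter Topology

open scoped Classical in
/-- Extend a function on a subtype to the full space by zero. -/
noncomputable def montelAuxExt (Ω : Set ℂ) (f : ↥Ω → ℂ) : ℂ → ℂ :=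
  fun z => if h : z ∈ Ω then f ⟨z, h⟩ else 0

theorem montelAuxExt_eq {Ω : Set ℂ} (f : ↥Ω → ℂ) {z : ℂ} (h : z ∈ Ω) :
    montelAuxExt Ω f z = f ⟨z, h⟩ := by
  simp [montelAuxExt, h]

/-- Montel–Hurwitz: if `(φ_n)` is a sequence of holomorphic functions on the open connected
set `Ω`, uniformly bounded on compact subsets of `Ω`, with `φ_n(λ₀) → 0` and
`|φ_n^{(k)}(μ)| ≥ δ > 0` for all `n`, then some subsequence `(φ_{n_j})` has zeros
`λ_j ∈ Ω` with `λ_j → λ₀`. -/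
theorem montel_hurwitz_zeros
    (Ω : Set ℂ) (hΩo : IsOpen Ω) (hΩc : IsConnected Ω)
    (φ : ℕ → ℂ → ℂ) (hhol : ∀ n, ∀ z ∈ Ω, DifferentiableAt ℂ (φ n) z)
    (hbd : ∀ K ⊆ Ω, IsCompact K → ∃ M : ℝ, ∀ n, ∀ z ∈ K, ‖φ n z‖ ≤ M)
    (lam₀ μ : ℂ) (hlam₀ : lam₀ ∈ Ω) (hμ : μ ∈ Ω)
    (k : ℕ) (δ : ℝ) (hδ : 0 < δ)
    (hlim : Tendsto (fun n => φ n lam₀) atTop (𝓝 0))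
    (hder : ∀ n, δ ≤ ‖iteratedDeriv k (φ n) μ‖) :
    ∃ idx : ℕ → ℕ, StrictMono idx ∧ ∃ lam : ℕ → ℂ, (∀ j, lam j ∈ Ω) ∧
      Tendsto lam atTop (𝓝 lam₀) ∧ ∀ j, φ (idx j) (lam j) = 0 := by
  haveI hlc : LocallyCompactSpace ↥Ω := hΩo.locallyCompactSpace
  -- continuity
  have hcont : ∀ n, ContinuousOn (φ n) Ω := fun n z hz =>
    (hhol n z hz).continuousAt.continuousWithinAt
  -- the restricted continuous maps
  let Fc : ℕ → C(↥Ω, ℂ) := fun n => ⟨fun x => φ n ↑x, (hcont n).restrict⟩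
  -- pointwise bounds
  have hMpt : ∀ x : ↥Ω, ∃ M : ℝ, ∀ n, ‖φ n ↑x‖ ≤ M := by
    intro x
    obtain ⟨M, hM⟩ := hbd {(x : ℂ)} (by simpa using x.2) isCompact_singleton
    exact ⟨M, fun n => hM n _ rfl⟩
  -- local equi-Lipschitz bound
  have key : ∀ x : ℂ, x ∈ Ω → ∃ d > 0, ∃ L : ℝ, 0 ≤ L ∧
      ∀ n, ∀ z ∈ Metric.ball x d, dist (φ n z) (φ n x) ≤ L * dist z x := by
    intro x hx
    obtain ⟨r, hr, hball⟩ := (Metric.nhds_basis_closedBall.mem_iff).1 (hΩo.mem_nhds hx)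
    obtain ⟨M, hMb⟩ := hbd (Metric.closedBall x r) hball (isCompact_closedBall _ _)
    have hM0 : 0 ≤ M := le_trans (norm_nonneg _) (hMb 0 x (Metric.mem_closedBall_self hr.le))
    refine ⟨r, hr, (2 * M + 1) / r, by positivity, ?_⟩
    intro n z hz
    have hdiff : DifferentiableOn ℂ (φ n) (Metric.ball x r) := fun w hw =>
      (hhol n w (hball (Metric.ball_subset_closedBall hw))).differentiableWithinAt
    have hmaps : Set.MapsTo (φ n) (Metric.ball x r) (Metric.ball (φ n x) (2 * M + 1)) := by
      intro w hw
      have h1 : ‖φ n w‖ ≤ M := hMb n w (Metric.ball_subset_closedBall hw)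
      have h2 : ‖φ n x‖ ≤ M := hMb n x (Metric.mem_closedBall_self hr.le)
      have h3 : dist (φ n w) (φ n x) ≤ ‖φ n w‖ + ‖φ n x‖ := by
        rw [dist_eq_norm]; exact norm_sub_le _ _
      rw [Metric.mem_ball]
      linarith
    exact Complex.dist_le_div_mul_dist_of_mapsTo_ball hdiff (hmaps.mono_right Metric.ball_subset_closedBall) hz
  -- Arzelà–Ascoli: compactness of the closure of the family
  have hclemb : Topology.IsClosedEmbedding
      ((UniformOnFun.ofFun {K : Set ↥Ω | IsCompact K}) ∘
        (DFunLike.coe : C(↥Ω, ℂ) → ↥Ω → ℂ)) := by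
    have heq : ((UniformOnFun.ofFun {K : Set ↥Ω | IsCompact K}) ∘
        (DFunLike.coe : C(↥Ω, ℂ) → ↥Ω → ℂ)) = ContinuousMap.toUniformOnFunIsCompact := rfl
    rw [heq]
    refine ⟨ContinuousMap.isUniformEmbedding_toUniformOnFunIsCompact.isEmbedding, ?_⟩
    rw [ContinuousMap.range_toUniformOnFunIsCompact]
    exact UniformOnFun.isClosed_setOf_continuous
      CompactlyCoherentSpace.isCoherentWith
  have hcomp : IsCompact (closure (Set.range Fc)) := by
    refine ArzelaAscoli.isCompact_closure_of_isClosedEmbedding (fun K hK => hK) hclemb ?_ ?_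
    · rintro K hK x hx U hU
      obtain ⟨d, hd, L, hL0, hlip⟩ := key ↑x x.2
      obtain ⟨ε, hε, hUε⟩ := Metric.mem_uniformity_dist.1 hU
      have hL1 : (0:ℝ) < L + 1 := by linarith
      have hnb : (Subtype.val ⁻¹' (Metric.ball (↑x : ℂ) (min d (ε / (L + 1))))) ∈ 𝓝[K] x := by
        apply nhdsWithin_le_nhds
        apply continuous_subtype_val.continuousAt.preimage_mem_nhds
        exact Metric.ball_mem_nhds _ (by positivity)
      filter_upwards [hnb] with y hy i
      obtain ⟨n, hn⟩ := i.2
      have hy' : dist (↑y : ℂ) ↑x < min d (ε / (L + 1)) := hy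
      apply hUε
      have hgoal : dist (φ n ↑x) (φ n ↑y) < ε := by
        rw [dist_comm]
        have h1 : dist (φ n ↑y) (φ n ↑x) ≤ L * dist (↑y : ℂ) ↑x :=
          hlip n _ (Metric.mem_ball.2 (lt_of_lt_of_le hy' (min_le_left _ _)))
        have h2 : dist (↑y : ℂ) ↑x < ε / (L + 1) := lt_of_lt_of_le hy' (min_le_right _ _)
        have h3 : L * dist (↑y : ℂ) ↑x ≤ L * (ε / (L + 1)) :=
          mul_le_mul_of_nonneg_left h2.le hL0
        have h4 : L * (ε / (L + 1)) < ε := by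
          rw [mul_div_assoc', div_lt_iff₀ hL1]
          nlinarith
        linarith
      have hi : (i : C(↥Ω, ℂ)) = Fc n := hn.symm
      simp only [Function.comp, hi, Fc]; exact hgoal
    · intro K hK x hx
      obtain ⟨M, hMx⟩ := hMpt x
      refine ⟨Metric.closedBall 0 M, isCompact_closedBall _ _, ?_⟩
      rintro i ⟨n, rfl⟩
      simp only [Metric.mem_closedBall, dist_zero_right]; exact hMx n
  -- sequential compactness: extract convergent subsequence
  haveI : FirstCountableTopology C(↥Ω, ℂ) := UniformSpace.firstCountableTopology _
  obtain ⟨ψc, hψmem, g, hg, hgconv⟩ :=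
    hcomp.isSeqCompact (fun n => subset_closure (Set.mem_range_self (f := Fc) n))
  set ψ : ℂ → ℂ := montelAuxExt Ω ⇑ψc with hψdef
  -- locally uniform convergence on Ω
  have htlu : TendstoLocallyUniformlyOn (fun j => φ (g j)) ψ atTop Ω := by
    rw [tendstoLocallyUniformlyOn_iff_forall_isCompact hΩo]
    intro K hKsub hK
    have hK' : IsCompact (Subtype.val ⁻¹' K : Set ↥Ω) := by
      rw [Subtype.isCompact_iff]
      have himg : Subtype.val '' (Subtype.val ⁻¹' K : Set ↥Ω) = K := by
        rw [Subtype.image_preimage_coe]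
        exact Set.inter_eq_self_of_subset_right hKsub
      rw [himg]; exact hK
    have huc := (ContinuousMap.tendsto_iff_forall_isCompact_tendstoUniformlyOn.1 hgconv)
      _ hK'
    rw [Metric.tendstoUniformlyOn_iff] at huc ⊢
    intro ε hε
    filter_upwards [huc ε hε] with j hj z hz
    have hzΩ : z ∈ Ω := hKsub hz
    have hjz := hj ⟨z, hzΩ⟩ hz
    rw [hψdef, montelAuxExt_eq ⇑ψc hzΩ]; exact hjz
  have hφdiff : ∀ n, DifferentiableOn ℂ (φ n) Ω := fun n z hz =>
    (hhol n z hz).differentiableWithinAt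
  have hψdiff : DifferentiableOn ℂ ψ Ω :=
    htlu.differentiableOn (Eventually.of_forall (fun j => hφdiff (g j))) hΩo
  have hψ0 : ψ lam₀ = 0 :=
    tendsto_nhds_unique (htlu.tendsto_at hlam₀) (hlim.comp hg.tendsto_atTop)
  -- iterated derivatives of the φ's are holomorphic
  have hD : ∀ m n, DifferentiableOn ℂ (deriv^[m] (φ n)) Ω := by
    intro m n
    induction m with
    | zero => exact hφdiff n
    | succ m ih =>
      have ha1 : AnalyticOnNhd ℂ (deriv^[m] (φ n)) Ω := ih.analyticOnNhd hΩo
      have ha2 := ha1.deriv.differentiableOn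
      rw [Function.iterate_succ']
      exact ha2
  -- convergence of iterated derivatives
  have hiter : ∀ m, TendstoLocallyUniformlyOn
      (fun j => deriv^[m] (φ (g j))) (deriv^[m] ψ) atTop Ω := by
    intro m
    induction m with
    | zero => exact htlu
    | succ m ih =>
      have hstep := ih.deriv (Eventually.of_forall fun j => hD m (g j)) hΩo
      have he : (deriv ∘ fun j => deriv^[m] (φ (g j))) = fun j => deriv^[m+1] (φ (g j)) := by
        funext j
        simp [Function.iterate_succ_apply']
      rw [he] at hstep
      rw [show deriv^[m+1] ψ = deriv (deriv^[m] ψ) from Function.iterate_succ_apply' _ _ _]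
      exact hstep
  -- the limit has large k-th derivative at μ
  have hψk : δ ≤ ‖deriv^[k] ψ μ‖ := by
    have h1 := (hiter k).tendsto_at hμ
    have h2 : Tendsto (fun j => ‖deriv^[k] (φ (g j)) μ‖) atTop
        (𝓝 ‖deriv^[k] ψ μ‖) := (continuous_norm.tendsto _).comp h1
    refine ge_of_tendsto h2 (Eventually.of_forall fun j => ?_)
    have h3 := hder (g j)
    rwa [iteratedDeriv_eq_iterate] at h3
  -- ψ is not identically zero
  have hψne0 : ¬ Set.EqOn ψ 0 Ω := by
    intro h
    have hz : ∀ m, ∀ z ∈ Ω, deriv^[m] ψ z = 0 := by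
      intro m
      induction m with
      | zero => intro z hz; exact h hz
      | succ m ih =>
        intro z hz
        rw [Function.iterate_succ_apply']
        have heq : deriv^[m] ψ =ᶠ[𝓝 z] (fun _ => (0:ℂ)) := by
          filter_upwards [hΩo.mem_nhds hz] with w hw using ih w hw
        rw [heq.deriv_eq]
        simp
    have h0 := hz k μ hμ
    rw [h0] at hψk
    simp at hψk
    linarith
  -- zeros of ψ near lam₀ are isolated
  have hfz : ∀ᶠ z in 𝓝[≠] lam₀, ψ z ≠ 0 := by
    by_contra h
    rw [Filter.not_eventually] at h
    exact hψne0 ((hψdiff.analyticOnNhd hΩo).eqOn_zero_of_preconnected_of_frequently_eq_zero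
      hΩc.isPreconnected hlam₀ (h.mono fun z hz => not_not.1 hz))
  obtain ⟨r₁, hr₁, hball₁⟩ := (Metric.nhds_basis_closedBall.mem_iff).1 (hΩo.mem_nhds hlam₀)
  rw [eventually_nhdsWithin_iff] at hfz
  obtain ⟨r₂, hr₂, hr₂p⟩ := Metric.eventually_nhds_iff.1 hfz
  set r₀ : ℝ := min r₁ r₂ with hr₀def
  have hr₀ : 0 < r₀ := lt_min hr₁ hr₂
  -- main claim: zeros of φ_{g j} close to lam₀ for large j
  have claim : ∀ ε > 0, ∀ N : ℕ, ∃ n, N ≤ n ∧ ∃ z, z ∈ Ω ∧ dist z lam₀ < ε ∧ φ n z = 0 := by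
    intro ε hε N
    set r : ℝ := min (ε/2) (r₀/2) with hrdef
    have hrpos : 0 < r := lt_min (by linarith) (by linarith)
    have hrr₁ : r ≤ r₁ := le_trans (min_le_right _ _)
      (le_trans (by linarith [min_le_left r₁ r₂] : r₀/2 ≤ r₀) (min_le_left _ _))
    have hrr₂ : r < r₂ := lt_of_le_of_lt (min_le_right _ _)
      (lt_of_lt_of_le (by linarith : r₀/2 < r₀) (min_le_right _ _))
    have hrΩ : Metric.closedBall lam₀ r ⊆ Ω :=
      le_trans (Metric.closedBall_subset_closedBall hrr₁) hball₁
    have hsne : (Metric.sphere lam₀ r).Nonempty := NormedSpace.sphere_nonempty.2 hrpos.le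
    have hsub : Metric.sphere lam₀ r ⊆ Ω := fun z hz =>
      hrΩ (Metric.sphere_subset_closedBall hz)
    have hψcont : ContinuousOn (fun z => ‖ψ z‖) (Metric.sphere lam₀ r) :=
      continuous_norm.comp_continuousOn (hψdiff.continuousOn.mono hsub)
    obtain ⟨w, hw, hwmin⟩ := (isCompact_sphere lam₀ r).exists_isMinOn hsne hψcont
    set m : ℝ := ‖ψ w‖ with hmdef
    have hwd : dist w lam₀ = r := Metric.mem_sphere.1 hw
    have hm : 0 < m := by
      apply norm_pos_iff.2
      apply hr₂p (by rw [hwd]; exact hrr₂)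
      rw [Set.mem_compl_iff, Set.mem_singleton_iff]
      intro hwe
      rw [hwe, dist_self] at hwd
      linarith
    have huk : TendstoUniformlyOn (fun j => φ (g j)) ψ atTop (Metric.sphere lam₀ r) :=
      (tendstoLocallyUniformlyOn_iff_forall_isCompact hΩo).1 htlu _ hsub
        (isCompact_sphere lam₀ r)
    rw [Metric.tendstoUniformlyOn_iff] at huk
    have h2 : ∀ᶠ j in atTop, dist (φ (g j) lam₀) 0 < m/2 :=
      Metric.tendsto_nhds.1 (hlim.comp hg.tendsto_atTop) (m/2) (by positivity)
    obtain ⟨j, ⟨hj1, hj2⟩, hjN⟩ :=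
      (((huk (m/2) (by positivity)).and h2).and (eventually_ge_atTop N)).exists
    have hzero : ∃ z ∈ Metric.ball lam₀ r, φ (g j) z = 0 := by
      by_contra h0
      push_neg at h0
      set f : ℂ → ℂ := φ (g j) with hfdef
      have hsphlb : ∀ z ∈ Metric.sphere lam₀ r, m/2 ≤ ‖f z‖ := by
        intro z hz
        have hd : dist (ψ z) (f z) < m/2 := hj1 z hz
        have hmz : m ≤ ‖ψ z‖ := isMinOn_iff.1 hwmin z hz
        have h3 : ‖ψ z‖ - ‖f z‖ ≤ ‖ψ z - f z‖ := norm_sub_norm_le _ _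
        rw [← dist_eq_norm] at h3
        linarith
      have hfnz : ∀ z ∈ Metric.closedBall lam₀ r, f z ≠ 0 := by
        intro z hz
        rw [← Metric.ball_union_sphere] at hz
        rcases hz with hz | hz
        · exact h0 z hz
        · intro hfz0
          have hlb := hsphlb z hz
          rw [hfz0, norm_zero] at hlb
          linarith
      have hfcont : ContinuousOn f (Metric.closedBall lam₀ r) :=
        (hcont (g j)).mono hrΩ
      have hdc : DiffContOnCl ℂ (fun z => (f z)⁻¹) (Metric.ball lam₀ r) := by
        constructor
        · intro z hz
          exact ((hhol (g j) z (hrΩ (Metric.ball_subset_closedBall hz))).inv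
            (hfnz z (Metric.ball_subset_closedBall hz))).differentiableWithinAt
        · rw [closure_ball _ hrpos.ne']
          exact hfcont.inv₀ (fun z hz => hfnz z hz)
      have hbdry : ∀ z ∈ frontier (Metric.ball lam₀ r), ‖(f z)⁻¹‖ ≤ (m/2)⁻¹ := by
        rw [frontier_ball _ hrpos.ne']
        intro z hz
        rw [norm_inv]
        exact inv_anti₀ (by positivity) (hsphlb z hz)
      have hcenter : ‖(f lam₀)⁻¹‖ ≤ (m/2)⁻¹ :=
        Complex.norm_le_of_forall_mem_frontier_norm_le Metric.isBounded_ball hdc hbdry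
          (by rw [closure_ball _ hrpos.ne']; exact Metric.mem_closedBall_self hrpos.le)
      have hfl0 : f lam₀ ≠ 0 := hfnz lam₀ (Metric.mem_closedBall_self hrpos.le)
      have hfpos : 0 < ‖f lam₀‖ := norm_pos_iff.2 hfl0
      rw [norm_inv] at hcenter
      have h' := inv_anti₀ (inv_pos.2 hfpos) hcenter
      rw [inv_inv, inv_inv] at h'
      rw [dist_zero_right] at hj2
      linarith
    obtain ⟨z, hzb, hz0⟩ := hzero
    refine ⟨g j, le_trans hjN hg.le_apply, z, hrΩ (Metric.ball_subset_closedBall hzb), ?_, hz0⟩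
    calc dist z lam₀ < r := Metric.mem_ball.1 hzb
      _ ≤ ε/2 := min_le_left _ _
      _ < ε := by linarith
  -- build the subsequence
  have claim' : ∀ q N : ℕ, ∃ p : ℕ × ℂ, N ≤ p.1 ∧ p.2 ∈ Ω ∧
      dist p.2 lam₀ < 1/(q+1) ∧ φ p.1 p.2 = 0 := by
    intro q N
    obtain ⟨n, hn, z, hz1, hz2, hz3⟩ := claim (1/(q+1)) (by positivity) N
    exact ⟨(n, z), hn, hz1, hz2, hz3⟩
  choose P h1 h2 h3 h4 using claim'
  let a : ℕ → ℕ × ℂ := fun q => q.rec (P 0 0) (fun q ih => P (q+1) (ih.1 + 1))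
  have ha : ∀ q, a (q+1) = P (q+1) ((a q).1 + 1) := fun q => rfl
  refine ⟨fun q => (a q).1, strictMono_nat_of_lt_succ fun q => ?_, fun q => (a q).2,
    fun q => ?_, ?_, fun q => ?_⟩
  · rw [ha q]
    exact lt_of_lt_of_le (Nat.lt_succ_self _) (h1 (q+1) ((a q).1 + 1))
  · show (a q).2 ∈ Ω
    cases q with
    | zero => exact h2 0 0
    | succ q => rw [ha q]; exact h2 _ _
  · rw [tendsto_iff_dist_tendsto_zero]
    refine squeeze_zero (fun q => dist_nonneg) (fun q => ?_)
      tendsto_one_div_add_atTop_nhds_zero_nat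
    cases q with
    | zero => exact (h3 0 0).le
    | succ q => rw [ha q]; exact (h3 _ _).le
  · show φ (a q).1 (a q).2 = 0
    cases q with
    | zero => exact h4 0 0
    | succ q => rw [ha q]; exact h4 _ _
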